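/- For u, v ∈ H^{1/2}(𝕋) ∩ H¹(𝕋) one has |∫₀^{2π} ( Im(ū' u) − Im(v̄' v) ) dx| ≤ C (‖u‖_{H^{1/2}} + ‖v‖_{H^{1/2}}) ‖u − v‖_{H^{1/2}}, where the H^{1/2} norm is defined via Fourier coefficients by ‖f‖²_{H^{1/2}} = Σ_{ξ∈ℤ} ⟨ξ⟩ |f̂(ξ)|². -/

import Mathlib

open Real MeasureTheory intervalIntegral Complex

noncomputable def fCoeff (f : ℝ → ℂ) (ξ : ℤ) : ℂ :=
  (1 / (2 * π)) * ∫ x in (0:ℝ)..(2 * π), f x * Complex.exp (-Complex.I * ξ * x)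

noncomputable def HhalfSq (f : ℝ → ℂ) : ℝ :=
  ∑' ξ : ℤ, Real.sqrt (1 + (ξ : ℝ) ^ 2) * ‖fCoeff f ξ‖ ^ 2

local instance : Fact (0 < 2 * π) := ⟨by positivity⟩

lemma two_pi_pos' : (0:ℝ) < 2 * π := by positivity

lemma fCoeff_eq_on (f : ℝ → ℂ) (n : ℤ) :
    fCoeff f n = fourierCoeffOn two_pi_pos' f n := by
  rw [fourierCoeffOn_eq_integral]
  simp only [sub_zero, smul_eq_mul, fourier_coe_apply]
  rw [fCoeff, Complex.real_smul]
  push_cast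
  congr 1
  apply intervalIntegral.integral_congr
  intro x _
  simp only
  rw [mul_comm]
  congr 1
  have h2 : (2*(π:ℂ)) ≠ 0 := by
    simp [Real.pi_ne_zero, Complex.ofReal_ne_zero]
  have h3 : 2*(π:ℂ)*I*(-(n:ℂ))*(x:ℂ)/(2*π) = -I*(n:ℂ)*(x:ℂ) := by
    field_simp
  rw [h3]

open AddCircle in
lemma fourierCoeff_liftIco (f : ℝ → ℂ) (n : ℤ) :
    fourierCoeff (AddCircle.liftIco (2*π) 0 f) n = fCoeff f n := by
  rw [fourierCoeff_liftIco_eq]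
  rw [fCoeff_eq_on]
  simp only [zero_add]

open AddCircle in
lemma pairing (f g : ℝ → ℂ) (hf : Continuous f) (hg : Continuous g)
    (pf : ∀ x, f (x + 2*π) = f x) (pg : ∀ x, g (x + 2*π) = g x) :
    HasSum (fun n : ℤ => (starRingEnd ℂ) (fCoeff f n) * fCoeff g n)
      (((1 / (2*π) : ℝ) : ℂ) * ∫ x in (0:ℝ)..(2*π), (starRingEnd ℂ) (f x) * g x) := by
  have hfc : Continuous (liftIco (2*π) 0 f) :=
    liftIco_zero_continuous (by simpa using (pf 0).symm) hf.continuousOn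
  have hgc : Continuous (liftIco (2*π) 0 g) :=
    liftIco_zero_continuous (by simpa using (pg 0).symm) hg.continuousOn
  set Fc : C(AddCircle (2*π), ℂ) := ⟨_, hfc⟩
  set Gc : C(AddCircle (2*π), ℂ) := ⟨_, hgc⟩
  set F2 := ContinuousMap.toLp (E := ℂ) 2 haarAddCircle ℂ Fc
  set G2 := ContinuousMap.toLp (E := ℂ) 2 haarAddCircle ℂ Gc
  have h := fourierBasis.hasSum_inner_mul_inner F2 G2
  have h1 : ∀ n : ℤ, (inner ℂ (F2) (fourierBasis n) : ℂ) * inner ℂ (fourierBasis n) G2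
      = (starRingEnd ℂ) (fCoeff f n) * fCoeff g n := by
    intro n
    have e1 : (inner ℂ (fourierBasis n) G2 : ℂ) = fCoeff g n := by
      rw [← fourierBasis.repr_apply_apply, fourierBasis_repr, fourierCoeff_toLp,
        ← fourierCoeff_liftIco g n]
      rfl
    have e2 : (inner ℂ F2 (fourierBasis n) : ℂ) = (starRingEnd ℂ) (fCoeff f n) := by
      rw [← inner_conj_symm, ← fourierBasis.repr_apply_apply, fourierBasis_repr,
        fourierCoeff_toLp, ← fourierCoeff_liftIco f n]
      rfl
    rw [e1, e2]
  have hne : ∀ᵐ x : ℝ, x ≠ 2*π := by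
    rw [MeasureTheory.ae_iff]
    have : {x : ℝ | ¬ x ≠ 2*π} = {(2*π : ℝ)} := by ext y; simp
    rw [this]
    exact measure_singleton _
  have e6 : ∫ x in (0:ℝ)..(2*π), (starRingEnd ℂ) (f x) * g x
      = ∫ x in (0:ℝ)..(0 + 2*π), (starRingEnd ℂ) (Fc x) * Gc x := by
    rw [zero_add]
    apply intervalIntegral.integral_congr_ae
    filter_upwards [hne] with x hx hmem
    rw [Set.uIoc_of_le two_pi_pos'.le] at hmem
    have hx' : x ∈ Set.Ico (0:ℝ) (2*π) := ⟨hmem.1.le, lt_of_le_of_ne hmem.2 hx⟩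
    show (starRingEnd ℂ) (f x) * g x = (starRingEnd ℂ) (Fc ↑x) * Gc ↑x
    simp only [Fc, Gc, ContinuousMap.coe_mk]
    rw [liftIco_zero_coe_apply hx', liftIco_zero_coe_apply hx']
  have e5 : ∫ x in (0:ℝ)..(0 + 2*π), (starRingEnd ℂ) (Fc x) * Gc x
      = ∫ t : AddCircle (2*π), (starRingEnd ℂ) (Fc t) * Gc t :=
    AddCircle.intervalIntegral_preimage (2*π) 0 (fun t => (starRingEnd ℂ) (Fc t) * Gc t)
  have e7 : ∫ t : AddCircle (2*π), (starRingEnd ℂ) (Fc t) * Gc t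
      = (2*π : ℝ) • ∫ t, (starRingEnd ℂ) (Fc t) * Gc t ∂haarAddCircle := by
    rw [volume_eq_smul_haarAddCircle, MeasureTheory.integral_smul_measure,
      ENNReal.toReal_ofReal two_pi_pos'.le]
  have h2 : (inner ℂ F2 G2 : ℂ)
      = ((1 / (2*π) : ℝ) : ℂ) * ∫ x in (0:ℝ)..(2*π), (starRingEnd ℂ) (f x) * g x := by
    rw [MeasureTheory.L2.inner_def]
    have e3 : ∫ t, (inner ℂ (F2 t) (G2 t) : ℂ) ∂haarAddCircle
        = ∫ t : AddCircle (2*π), (starRingEnd ℂ) (Fc t) * Gc t ∂haarAddCircle := by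
      apply MeasureTheory.integral_congr_ae
      filter_upwards [ContinuousMap.coeFn_toLp (p := 2) (𝕜 := ℂ) (μ := haarAddCircle) Fc,
        ContinuousMap.coeFn_toLp (p := 2) (𝕜 := ℂ) (μ := haarAddCircle) Gc] with t h1 h2
      rw [RCLike.inner_apply, h1, h2, mul_comm]
    rw [e3, e6, e5, e7, Complex.real_smul]
    rw [← mul_assoc, ← Complex.ofReal_mul, one_div, inv_mul_cancel₀ two_pi_pos'.ne',
      Complex.ofReal_one, one_mul]
  simpa only [h1, h2] using h

lemma deriv_periodic (u : ℝ → ℂ) (pu : ∀ x, u (x + 2*π) = u x) :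
    ∀ x, deriv u (x + 2*π) = deriv u x := by
  intro x
  have : (fun y => u (y + 2*π)) = u := funext pu
  conv_rhs => rw [← this]
  rw [deriv_comp_add_const]

lemma fCoeff_sub (u v : ℝ → ℂ) (hu : Continuous u) (hv : Continuous v) (n : ℤ) :
    fCoeff (u - v) n = fCoeff u n - fCoeff v n := by
  unfold fCoeff
  rw [← mul_sub, ← intervalIntegral.integral_sub]
  · congr 1
    apply intervalIntegral.integral_congr
    intro x _
    simp [sub_mul]
  · exact ((hu.mul (by continuity)).intervalIntegrable _ _)
  · exact ((hv.mul (by continuity)).intervalIntegrable _ _)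

lemma fCoeff_deriv (u : ℝ → ℂ) (hu : ContDiff ℝ 1 u) (pu : ∀ x, u (x + 2*π) = u x) (n : ℤ) :
    fCoeff (deriv u) n = Complex.I * n * fCoeff u n := by
  have hcd : Continuous (deriv u) := hu.continuous_deriv le_rfl
  have hdiff : Differentiable ℝ u := hu.differentiable one_ne_zero
  have hu20 : u (2*π) = u 0 := by simpa using pu 0
  rcases eq_or_ne n 0 with hn | hn
  · subst hn
    rw [fCoeff]
    have : ∫ x in (0:ℝ)..(2*π), deriv u x * Complex.exp (-Complex.I * (0:ℤ) * x)
        = ∫ x in (0:ℝ)..(2*π), deriv u x := by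
      apply intervalIntegral.integral_congr
      intro x _; simp
    rw [this, intervalIntegral.integral_deriv_eq_sub (fun x _ => hdiff x)
      (hcd.intervalIntegrable _ _), hu20]
    simp
  · have key := fourierCoeffOn_of_hasDerivAt two_pi_pos' hn
      (fun x _ => (hdiff x).hasDerivAt) (hcd.intervalIntegrable _ _)
    rw [← fCoeff_eq_on, ← fCoeff_eq_on] at key
    rw [hu20, sub_self, mul_zero, zero_sub] at key
    have hπ : ((π:ℂ)) ≠ 0 := Complex.ofReal_ne_zero.mpr Real.pi_ne_zero
    have hnc : ((n:ℂ)) ≠ 0 := Int.cast_ne_zero.mpr hn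
    field_simp at key
    apply mul_left_cancel₀ (show (2*(π:ℂ)) ≠ 0 by simp [hπ])
    rw [Complex.ofReal_zero, sub_zero, Complex.ofReal_mul, Complex.ofReal_ofNat] at key
    rw [← key]
    ring

lemma intervalIntegral_im {a b : ℝ} (f : ℝ → ℂ) (hf : IntervalIntegrable f volume a b) :
    (∫ x in a..b, f x).im = ∫ x in a..b, (f x).im := by
  have h1 := Complex.imCLM.integral_comp_comm hf.1
  have h2 := Complex.imCLM.integral_comp_comm hf.2
  simp only [Complex.imCLM_apply] at h1 h2
  rw [intervalIntegral, intervalIntegral, Complex.sub_im, ← h1, ← h2]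

lemma momentum_hasSum (u : ℝ → ℂ) (hu : ContDiff ℝ 1 u) (pu : ∀ x, u (x + 2*π) = u x) :
    HasSum (fun ξ : ℤ => -(ξ:ℝ) * ‖fCoeff u ξ‖^2)
      ((1/(2*π)) * ∫ x in (0:ℝ)..(2*π), ((starRingEnd ℂ) (deriv u x) * u x).im) := by
  have hcd : Continuous (deriv u) := hu.continuous_deriv le_rfl
  have h := pairing (deriv u) u hcd hu.continuous (deriv_periodic u pu) pu
  have h2 := h.mapL Complex.imCLM
  have e1 : ∀ ξ : ℤ, Complex.imCLM ((starRingEnd ℂ) (fCoeff (deriv u) ξ) * fCoeff u ξ)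
      = -(ξ:ℝ) * ‖fCoeff u ξ‖^2 := by
    intro ξ
    rw [fCoeff_deriv u hu pu]
    set c := fCoeff u ξ
    have hc : (starRingEnd ℂ) c * c = ((‖c‖^2 : ℝ) : ℂ) := by
      rw [mul_comm, Complex.mul_conj, Complex.sq_norm]
    have : (starRingEnd ℂ) (Complex.I * ξ * c) * c
        = -Complex.I * ξ * ((‖c‖^2 : ℝ) : ℂ) := by
      rw [map_mul, map_mul, Complex.conj_I, map_intCast, mul_assoc, hc]
    rw [this]
    simp [Complex.mul_im, ← Complex.ofReal_pow]
  have e2 : Complex.imCLM (((1 / (2*π) : ℝ) : ℂ)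
        * ∫ x in (0:ℝ)..(2*π), (starRingEnd ℂ) (deriv u x) * u x)
      = (1/(2*π)) * ∫ x in (0:ℝ)..(2*π), ((starRingEnd ℂ) (deriv u x) * u x).im := by
    have hcont : Continuous fun x => (starRingEnd ℂ) (deriv u x) * u x :=
      (Complex.continuous_conj.comp hcd).mul hu.continuous
    show (((1 / (2*π) : ℝ) : ℂ) * _).im = _
    rw [Complex.mul_im, Complex.ofReal_re, Complex.ofReal_im, zero_mul, add_zero,
      intervalIntegral_im _ (hcont.intervalIntegrable _ _)]
  rw [← e2]
  simpa only [e1] using h2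

lemma summable_sq (f : ℝ → ℂ) (hf : Continuous f) (pf : ∀ x, f (x + 2*π) = f x) :
    Summable (fun n : ℤ => ‖fCoeff f n‖^2) := by
  have h := ((pairing f f hf hf pf pf).mapL Complex.reCLM).summable
  apply h.congr
  intro n
  show ((starRingEnd ℂ) (fCoeff f n) * fCoeff f n).re = ‖fCoeff f n‖^2
  rw [mul_comm, Complex.mul_conj]
  simp [Complex.normSq_eq_norm_sq, ← Complex.ofReal_pow]

lemma summable_hhalf (u : ℝ → ℂ) (hu : ContDiff ℝ 1 u) (pu : ∀ x, u (x + 2*π) = u x) :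
    Summable (fun ξ : ℤ => Real.sqrt (1 + (ξ:ℝ)^2) * ‖fCoeff u ξ‖^2) := by
  have hcd : Continuous (deriv u) := hu.continuous_deriv le_rfl
  have hS1 : Summable fun ξ : ℤ => ‖fCoeff (deriv u) ξ‖^2 :=
    summable_sq _ hcd (deriv_periodic u pu)
  have hS2 : Summable fun ξ : ℤ => (if ξ = (0:ℤ) then ‖fCoeff u 0‖^2 else 0) :=
    (hasSum_ite_eq (0:ℤ) (‖fCoeff u 0‖^2)).summable
  apply Summable.of_nonneg_of_le (fun ξ => by positivity) ?_ ((hS1.mul_left 2).add hS2)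
  intro ξ
  rcases eq_or_ne ξ 0 with h0 | hn
  · subst h0
    simp only [if_pos rfl]
    push_cast
    rw [show (1:ℝ) + 0^2 = 1 by norm_num, Real.sqrt_one, one_mul]
    nlinarith [sq_nonneg ‖fCoeff (deriv u) 0‖]
  · have h1 : ‖fCoeff (deriv u) ξ‖^2 = (ξ:ℝ)^2 * ‖fCoeff u ξ‖^2 := by
      rw [fCoeff_deriv u hu pu, norm_mul, norm_mul, Complex.norm_I, one_mul,
        Complex.norm_intCast, mul_pow,
        (by rw [sq, sq, abs_mul_abs_self] : |(ξ:ℝ)|^2 = (ξ:ℝ)^2)]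
    have hx : (1:ℝ) ≤ (ξ:ℝ)^2 := by
      have : (1:ℤ) ≤ |ξ| := Int.one_le_abs hn
      have h2 : (1:ℝ) ≤ |(ξ:ℝ)| := by exact_mod_cast this
      nlinarith [abs_nonneg ((ξ:ℝ)),
        (by rw [sq, sq, abs_mul_abs_self] : |(ξ:ℝ)|^2 = (ξ:ℝ)^2)]
    have hsq : Real.sqrt (1 + (ξ:ℝ)^2) ≤ 2*(ξ:ℝ)^2 := by
      have h3 : (1:ℝ) + (ξ:ℝ)^2 ≤ (2*(ξ:ℝ)^2)^2 := by nlinarith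
      calc Real.sqrt (1 + (ξ:ℝ)^2) ≤ Real.sqrt ((2*(ξ:ℝ)^2)^2) := Real.sqrt_le_sqrt h3
        _ = 2*(ξ:ℝ)^2 := Real.sqrt_sq (by positivity)
    rw [if_neg hn, add_zero, h1, ← mul_assoc]
    exact mul_le_mul_of_nonneg_right hsq (sq_nonneg _)

lemma tsum_cs (a b : ℤ → ℝ) (ha : ∀ i, 0 ≤ a i) (hb : ∀ i, 0 ≤ b i)
    (hsa : Summable fun i => a i^2) (hsb : Summable fun i => b i^2) :
    Summable (fun i => a i * b i) ∧
      ∑' i, a i * b i ≤ Real.sqrt (∑' i, a i^2) * Real.sqrt (∑' i, b i^2) := by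
  have hsum : Summable (fun i => a i * b i) :=
    Summable.of_nonneg_of_le (fun i => mul_nonneg (ha i) (hb i))
      (fun i => by nlinarith [sq_nonneg (a i - b i)]) (hsa.add hsb)
  refine ⟨hsum, ?_⟩
  apply Summable.tsum_le_of_sum_le hsum
  intro s
  have h1 : (∑ i ∈ s, a i * b i)^2 ≤ (∑ i ∈ s, a i^2) * (∑ i ∈ s, b i^2) :=
    Finset.sum_mul_sq_le_sq_mul_sq s a b
  have hs0 : (0:ℝ) ≤ ∑ i ∈ s, a i * b i :=
    Finset.sum_nonneg fun i _ => mul_nonneg (ha i) (hb i)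
  calc ∑ i ∈ s, a i * b i
      ≤ Real.sqrt ((∑ i ∈ s, a i^2) * (∑ i ∈ s, b i^2)) := by
        rw [show (∑ i ∈ s, a i * b i) = Real.sqrt ((∑ i ∈ s, a i * b i)^2) from
          (Real.sqrt_sq hs0).symm]
        exact Real.sqrt_le_sqrt h1
    _ = Real.sqrt (∑ i ∈ s, a i^2) * Real.sqrt (∑ i ∈ s, b i^2) :=
        Real.sqrt_mul (Finset.sum_nonneg fun i _ => sq_nonneg _) _
    _ ≤ Real.sqrt (∑' i, a i^2) * Real.sqrt (∑' i, b i^2) := by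
        apply mul_le_mul
        · exact Real.sqrt_le_sqrt (Summable.sum_le_tsum s (fun i _ => sq_nonneg _) hsa)
        · exact Real.sqrt_le_sqrt (Summable.sum_le_tsum s (fun i _ => sq_nonneg _) hsb)
        · positivity
        · positivity


/-- Momentum-difference estimate:
`|∫₀^{2π} (Im(ū'u) - Im(v̄'v))| ≤ C(‖u‖_{H^{1/2}} + ‖v‖_{H^{1/2}})‖u-v‖_{H^{1/2}}`. -/
theorem momentum_difference_estimate :
    ∃ C > 0, ∀ u v : ℝ → ℂ, ContDiff ℝ 1 u → ContDiff ℝ 1 v →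
      (∀ x, u (x + 2 * π) = u x) → (∀ x, v (x + 2 * π) = v x) →
      |∫ x in (0:ℝ)..(2 * π),
          (((starRingEnd ℂ) (deriv u x) * u x).im
            - ((starRingEnd ℂ) (deriv v x) * v x).im)| ≤
        C * (Real.sqrt (HhalfSq u) + Real.sqrt (HhalfSq v))
          * Real.sqrt (HhalfSq (u - v)) := by
  refine ⟨2*π, two_pi_pos', ?_⟩
  intro u v hu hv pu pv
  have hcu : Continuous u := hu.continuous
  have hcv : Continuous v := hv.continuous
  have hdu : Continuous (deriv u) := hu.continuous_deriv le_rfl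
  have hdv : Continuous (deriv v) := hv.continuous_deriv le_rfl
  have huv : ContDiff ℝ 1 (u - v) := hu.sub hv
  have puv : ∀ x, (u - v) (x + 2*π) = (u - v) x := fun x => by
    simp [Pi.sub_apply, pu x, pv x]
  -- the two integrals
  set Pu := ∫ x in (0:ℝ)..(2*π), ((starRingEnd ℂ) (deriv u x) * u x).im with hPu
  set Pv := ∫ x in (0:ℝ)..(2*π), ((starRingEnd ℂ) (deriv v x) * v x).im with hPv
  have hiu : IntervalIntegrable (fun x => ((starRingEnd ℂ) (deriv u x) * u x).im)
      volume 0 (2*π) :=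
    (Complex.continuous_im.comp ((Complex.continuous_conj.comp hdu).mul hcu)).intervalIntegrable _ _
  have hiv : IntervalIntegrable (fun x => ((starRingEnd ℂ) (deriv v x) * v x).im)
      volume 0 (2*π) :=
    (Complex.continuous_im.comp ((Complex.continuous_conj.comp hdv).mul hcv)).intervalIntegrable _ _
  have hsplit : ∫ x in (0:ℝ)..(2*π),
      (((starRingEnd ℂ) (deriv u x) * u x).im - ((starRingEnd ℂ) (deriv v x) * v x).im)
      = Pu - Pv := intervalIntegral.integral_sub hiu hiv
  rw [hsplit]
  -- HasSum identities
  have Hu := momentum_hasSum u hu pu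
  have Hv := momentum_hasSum v hv pv
  have Hd := Hu.sub Hv
  set A : ℤ → ℝ := fun ξ => -(ξ:ℝ) * ‖fCoeff u ξ‖^2 - (-(ξ:ℝ) * ‖fCoeff v ξ‖^2) with hA
  have hsumA : Summable A := Hd.summable
  have htsumA : ∑' ξ, A ξ = 1/(2*π) * Pu - 1/(2*π) * Pv := Hd.tsum_eq
  -- ℓ² data
  set w : ℤ → ℝ := fun ξ => Real.sqrt (Real.sqrt (1 + (ξ:ℝ)^2)) with hw
  have hwsq : ∀ ξ, (w ξ)^2 = Real.sqrt (1 + (ξ:ℝ)^2) := fun ξ =>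
    Real.sq_sqrt (Real.sqrt_nonneg _)
  set a1 : ℤ → ℝ := fun ξ => w ξ * ‖fCoeff u ξ‖ with ha1
  set a2 : ℤ → ℝ := fun ξ => w ξ * ‖fCoeff v ξ‖ with ha2
  set b : ℤ → ℝ := fun ξ => w ξ * ‖fCoeff (u - v) ξ‖ with hb
  have hsq : ∀ (f : ℝ → ℂ) (ξ : ℤ), (w ξ * ‖fCoeff f ξ‖)^2
      = Real.sqrt (1 + (ξ:ℝ)^2) * ‖fCoeff f ξ‖^2 := by
    intro f ξ; rw [mul_pow, hwsq]
  have Su : Summable (fun ξ => (a1 ξ)^2) :=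
    (summable_hhalf u hu pu).congr (fun ξ => (hsq u ξ).symm)
  have Sv : Summable (fun ξ => (a2 ξ)^2) :=
    (summable_hhalf v hv pv).congr (fun ξ => (hsq v ξ).symm)
  have Sd : Summable (fun ξ => (b ξ)^2) :=
    (summable_hhalf (u - v) huv puv).congr (fun ξ => (hsq (u - v) ξ).symm)
  have wnn : ∀ ξ, 0 ≤ w ξ := fun ξ => Real.sqrt_nonneg _
  have CS1 := tsum_cs a1 b (fun ξ => mul_nonneg (wnn ξ) (norm_nonneg _))
    (fun ξ => mul_nonneg (wnn ξ) (norm_nonneg _)) Su Sd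
  have CS2 := tsum_cs a2 b (fun ξ => mul_nonneg (wnn ξ) (norm_nonneg _))
    (fun ξ => mul_nonneg (wnn ξ) (norm_nonneg _)) Sv Sd
  have htu : ∑' ξ, (a1 ξ)^2 = HhalfSq u := tsum_congr (fun ξ => hsq u ξ)
  have htv : ∑' ξ, (a2 ξ)^2 = HhalfSq v := tsum_congr (fun ξ => hsq v ξ)
  have htd : ∑' ξ, (b ξ)^2 = HhalfSq (u - v) := tsum_congr (fun ξ => hsq (u - v) ξ)
  -- termwise bound
  have hterm : ∀ ξ, |A ξ| ≤ a1 ξ * b ξ + a2 ξ * b ξ := by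
    intro ξ
    have hd : fCoeff (u - v) ξ = fCoeff u ξ - fCoeff v ξ := fCoeff_sub u v hcu hcv ξ
    set p := ‖fCoeff u ξ‖
    set q := ‖fCoeff v ξ‖
    set r := ‖fCoeff (u - v) ξ‖
    have h1 : |p - q| ≤ r := by
      calc |p - q| ≤ ‖fCoeff u ξ - fCoeff v ξ‖ := abs_norm_sub_norm_le _ _
        _ = r := by rw [← hd]
    have h2 : |(ξ:ℝ)| ≤ Real.sqrt (1 + (ξ:ℝ)^2) := by
      rw [← Real.sqrt_sq_eq_abs]
      exact Real.sqrt_le_sqrt (by linarith)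
    have hpq : (0:ℝ) ≤ p + q := by positivity
    have key : |A ξ| ≤ Real.sqrt (1 + (ξ:ℝ)^2) * (r * (p + q)) := by
      have e : A ξ = -(ξ:ℝ) * ((p - q) * (p + q)) := by rw [hA]; ring
      rw [e, abs_mul, abs_mul, abs_neg]
      have : |p + q| = p + q := abs_of_nonneg hpq
      rw [this]
      exact mul_le_mul h2 (mul_le_mul_of_nonneg_right h1 hpq)
        (by positivity) (Real.sqrt_nonneg _)
    calc |A ξ| ≤ Real.sqrt (1 + (ξ:ℝ)^2) * (r * (p + q)) := key
      _ = a1 ξ * b ξ + a2 ξ * b ξ := by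
          rw [ha1, ha2, hb]
          simp only
          rw [← hwsq ξ]
          ring
  -- sum the bound
  have hAbs : Summable (fun ξ => |A ξ|) := hsumA.abs
  have hBsum : Summable (fun ξ => a1 ξ * b ξ + a2 ξ * b ξ) := CS1.1.add CS2.1
  have habs_tsum : |∑' ξ, A ξ| ≤ ∑' ξ, |A ξ| := by
    simpa [Real.norm_eq_abs] using norm_tsum_le_tsum_norm (f := A) (by
      simpa [Real.norm_eq_abs] using hAbs)
  have hbound : ∑' ξ, |A ξ| ≤ Real.sqrt (HhalfSq u) * Real.sqrt (HhalfSq (u - v))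
      + Real.sqrt (HhalfSq v) * Real.sqrt (HhalfSq (u - v)) := by
    calc ∑' ξ, |A ξ| ≤ ∑' ξ, (a1 ξ * b ξ + a2 ξ * b ξ) :=
          Summable.tsum_le_tsum hterm hAbs hBsum
      _ = (∑' ξ, a1 ξ * b ξ) + ∑' ξ, a2 ξ * b ξ := Summable.tsum_add CS1.1 CS2.1
      _ ≤ Real.sqrt (HhalfSq u) * Real.sqrt (HhalfSq (u - v))
          + Real.sqrt (HhalfSq v) * Real.sqrt (HhalfSq (u - v)) := by
          have c1 := CS1.2
          have c2 := CS2.2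
          rw [htu, htd] at c1
          rw [htv, htd] at c2
          exact add_le_add c1 c2
  -- final arithmetic
  have hPd : Pu - Pv = (2*π) * ∑' ξ, A ξ := by
    rw [htsumA]
    field_simp
  rw [hPd, abs_mul, abs_of_pos two_pi_pos']
  calc (2*π) * |∑' ξ, A ξ|
      ≤ (2*π) * (Real.sqrt (HhalfSq u) * Real.sqrt (HhalfSq (u - v))
        + Real.sqrt (HhalfSq v) * Real.sqrt (HhalfSq (u - v))) :=
        mul_le_mul_of_nonneg_left (le_trans habs_tsum hbound) two_pi_pos'.le
    _ = 2*π * (Real.sqrt (HhalfSq u) + Real.sqrt (HhalfSq v))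
        * Real.sqrt (HhalfSq (u - v)) := by ring
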